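/- In the scalar setting with a, g, h real parameters, g > 0, |a| > 0, h > −(1−|a|)²/g, the maximal root x_M = (−(1 − |a|² − g h) + √D)/(2g) of g x² + (1 − |a|² − g h)x − h = 0 satisfies |a|²/(1 + g x_M)² < 1, where D = (1 − |a|² − g h)² + 4 g h > 0. -/

import Mathlib

theorem stmt16 (a : ℂ) (g h D xM : ℝ) (hg : 0 < g) (ha : 0 < ‖a‖)
    (hh : h > -(1 - ‖a‖) ^ 2 / g)
    (hD : D = (1 - ‖a‖ ^ 2 - g * h) ^ 2 + 4 * g * h)
    (hxM : xM = (-(1 - ‖a‖ ^ 2 - g * h) + Real.sqrt D) / (2 * g)) :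
    0 < D ∧ g * xM ^ 2 + (1 - ‖a‖ ^ 2 - g * h) * xM - h = 0 ∧
      ‖a‖ ^ 2 / (1 + g * xM) ^ 2 < 1 := by
  set r := ‖a‖ with hrdef
  have hgh : -(1 - r) ^ 2 < g * h := by
    have := (div_lt_iff₀ hg).mp hh
    linarith [this]
  have f1 : 0 < g * h + (1 - r) ^ 2 := by linarith
  have f2 : 0 < g * h + (1 + r) ^ 2 := by nlinarith
  have hDfac : D = (g * h + (1 - r) ^ 2) * (g * h + (1 + r) ^ 2) := by rw [hD]; ring
  have hDpos : 0 < D := by rw [hDfac]; positivity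
  have hs : Real.sqrt D ^ 2 = D := Real.sq_sqrt hDpos.le
  have hsp : 0 < Real.sqrt D := Real.sqrt_pos.mpr hDpos
  refine ⟨hDpos, ?_, ?_⟩
  · subst hxM
    field_simp
    nlinarith [hs, hD]
  · have hgx : g * xM = (-(1 - r ^ 2 - g * h) + Real.sqrt D) / 2 := by
      rw [hxM]; field_simp
    have h2 : r < 1 + g * xM := by rw [hgx]; nlinarith
    have h1 : 0 < 1 + g * xM := lt_trans ha h2
    rw [div_lt_one (by positivity)]
    nlinarith
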